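/- If φ: G → A is a group homomorphism into an R-closed group A, then every R-invisible subgroup N of G is contained in the kernel of φ. -/

import Mathlib

open scoped TensorProduct

/-- The set of denominators of (reduced fractional expressions of) elements of `R ⊆ ℚ`. -/
def DR (R : Subring ℚ) : Set ℕ := {d | ∃ q ∈ R, q.den = d}

lemma DR_pos {R : Subring ℚ} {d : ℕ} (hd : d ∈ DR R) : 0 < d := by
  obtain ⟨q, _, rfl⟩ := hd; exact q.pos

lemma DR_one_mem (R : Subring ℚ) : 1 ∈ DR R := ⟨0, R.zero_mem, rfl⟩

set_option linter.unnecessarySimpa false in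
lemma DR_inv_mem {R : Subring ℚ} {d : ℕ} (hd : d ∈ DR R) : ((d : ℚ))⁻¹ ∈ R := by
  obtain ⟨q, hq, rfl⟩ := hd
  have hcop : IsCoprime q.num (q.den : ℤ) := by
    rw [Int.isCoprime_iff_gcd_eq_one]
    simpa [Int.gcd] using q.reduced
  obtain ⟨u, v, huv⟩ := hcop
  have hd0 : ((q.den : ℚ)) ≠ 0 := by exact_mod_cast q.den_nz
  have hqd : q * ((q.den : ℚ)) = (q.num : ℚ) := by
    have h := congrArg (· * ((q.den : ℚ))) (Rat.num_div_den q)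
    simpa [div_mul_cancel₀ _ hd0, eq_comm] using h
  have hmul : ((u : ℚ) * q + (v : ℚ)) * ((q.den : ℚ)) = 1 := by
    rw [add_mul, mul_assoc, hqd]
    have : ((u * q.num + v * (q.den : ℤ) : ℤ) : ℚ) = 1 := by rw [huv]; norm_num
    push_cast at this
    linarith
  rw [← eq_inv_of_mul_eq_one_left hmul]
  exact R.add_mem (R.mul_mem (intCast_mem R u) hq) (intCast_mem R v)

lemma DR_mul_mem {R : Subring ℚ} {d₁ d₂ : ℕ} (h₁ : d₁ ∈ DR R) (h₂ : d₂ ∈ DR R) :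
    d₁ * d₂ ∈ DR R := by
  refine ⟨(((d₁ * d₂ : ℕ)) : ℚ)⁻¹, ?_, Rat.inv_natCast_den_of_pos (Nat.mul_pos (DR_pos h₁) (DR_pos h₂))⟩
  push_cast
  rw [mul_inv]
  exact R.mul_mem (DR_inv_mem h₁) (DR_inv_mem h₂)

variable {G H A : Type*} [Group G] [Group H] [Group A]

/-- Evaluation of a monomial over `G` in `n` indeterminates at a tuple of elements of `G`. -/
noncomputable def evalWord {n : ℕ} (g : Fin n → G) :
    Monoid.Coprod G (FreeGroup (Fin n)) →* G :=
  Monoid.Coprod.lift (MonoidHom.id G) (FreeGroup.lift g)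

/-- The projection `G * F → F → F/[F,F]`. -/
noncomputable def toFreeAb (G : Type*) [Group G] (n : ℕ) :
    Monoid.Coprod G (FreeGroup (Fin n)) →* Abelianization (FreeGroup (Fin n)) :=
  Monoid.Coprod.lift 1 Abelianization.of

/-- An `R`-nullhomologous system of equations `xᵢ^e = wᵢ(x₁,…,xₙ)` over `G`. -/
structure NullSys (R : Subring ℚ) (G : Type*) [Group G] where
  n : ℕ
  e : ℕ
  he : e ∈ DR R
  w : Fin n → Monoid.Coprod G (FreeGroup (Fin n))
  nullh : ∀ i, toFreeAb G n (w i) = 1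

/-- A solution of a system of equations over `G`. -/
def NullSys.IsSolution {R : Subring ℚ} (S : NullSys R G) (g : Fin S.n → G) : Prop :=
  ∀ i, (g i) ^ S.e = evalWord g (S.w i)

/-- A group is `R`-closed if every `R`-nullhomologous system over it has a unique solution. -/
def IsRClosed (R : Subring ℚ) (A : Type*) [Group A] : Prop :=
  ∀ S : NullSys R A, ∃! g : Fin S.n → A, S.IsSolution g

/-- A normal subgroup `N ≤ G` is `R`-invisible if it is normally finitely generated and every
element of `N/[G,N]` has (finite) order lying in `D_R`. -/
def IsRInvisible (R : Subring ℚ) {G : Type*} [Group G] (N : Subgroup G) : Prop :=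
  N.Normal ∧
  (∃ s : Finset G, ↑s ⊆ (N : Set G) ∧ Subgroup.normalClosure ↑s = N) ∧
  ∀ x ∈ N, ∃ e ∈ DR R, x ^ e ∈ ⁅(⊤ : Subgroup G), N⁆

/-- Every `R`-invisible subgroup of `G` is killed by any homomorphism into an `R`-closed
group. -/
theorem rInvisible_le_ker_of_isRClosed (R : Subring ℚ) {G A : Type*} [Group G] [Group A]
    (φ : G →* A) (hA : IsRClosed R A) (N : Subgroup G) (hN : IsRInvisible R N) :
    N ≤ φ.ker := by
  classical
  obtain ⟨hNnorm, ⟨s, hsN, hclos⟩, hord⟩ := hN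
  haveI := hNnorm
  set n := s.card with hn
  set gv : Fin n → G := fun i => ((s.equivFin.symm i : s) : G) with hgv
  have hgvN : ∀ i, gv i ∈ N := fun i => hsN (s.equivFin.symm i).2
  -- exponents
  choose eF heF hpow using fun i : Fin n => hord (gv i) (hgvN i)
  set E : ℕ := ∏ i, eF i with hE
  have hEDR : E ∈ DR R :=
    Finset.prod_induction eF (· ∈ DR R) (fun _ _ => DR_mul_mem) (DR_one_mem R)
      (fun i _ => heF i)
  have hEpow : ∀ i, (gv i) ^ E ∈ ⁅(⊤ : Subgroup G), N⁆ := by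
    intro i
    obtain ⟨c, hc⟩ := Finset.dvd_prod_of_mem eF (Finset.mem_univ i)
    rw [← hE] at hc
    rw [hc, pow_mul]
    exact Subgroup.pow_mem _ (hpow i) c
  -- the two evaluation homomorphisms on G * F
  set ev : Monoid.Coprod G (FreeGroup (Fin n)) →* G := evalWord gv with hev
  set π : Monoid.Coprod G (FreeGroup (Fin n)) →* G := evalWord (fun _ => 1) with hπ
  have hev_inl : ∀ g : G, ev (Monoid.Coprod.inl g) = g := fun g => by
    simp [hev, evalWord]
  have hπ_inl : ∀ g : G, π (Monoid.Coprod.inl g) = g := fun g => by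
    simp [hπ, evalWord]
  have hev_surj : Function.Surjective ev := fun g => ⟨Monoid.Coprod.inl g, hev_inl g⟩
  -- the subgroup of elements of G liftable to π.ker
  set L : Subgroup G := Subgroup.map ev π.ker with hL
  haveI : L.Normal := (MonoidHom.normal_ker π).map ev hev_surj
  have hNL : N ≤ L := by
    rw [← hclos]
    apply Subgroup.normalClosure_le_normal
    intro x hx
    refine ⟨Monoid.Coprod.inr (FreeGroup.of (s.equivFin ⟨x, hx⟩)), ?_, ?_⟩
    · simp [MonoidHom.mem_ker, hπ, evalWord]
    · simp [hev, evalWord, hgv]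
  -- lifting [G,N] to the kernel of both π and toFreeAb
  set K : Subgroup (Monoid.Coprod G (FreeGroup (Fin n))) := (toFreeAb G n).ker ⊓ π.ker with hK
  have hcomm : ⁅(⊤ : Subgroup G), N⁆ ≤ Subgroup.map ev K := by
    rw [Subgroup.commutator_le]
    intro g _ h hh
    obtain ⟨m, hmker, hmev⟩ := hNL hh
    refine ⟨@Bracket.bracket _ _ commutatorElement (Monoid.Coprod.inl g : Monoid.Coprod G (FreeGroup (Fin n))) m, ⟨?_, ?_⟩, ?_⟩
    · exact MonoidHom.mem_ker.mpr (by
        rw [map_commutatorElement]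
        exact commutatorElement_eq_one_iff_commute.mpr (Commute.all _ _))
    · exact MonoidHom.mem_ker.mpr (by
        rw [map_commutatorElement, MonoidHom.mem_ker.mp hmker, commutatorElement_one_right])
    · rw [map_commutatorElement, hmev, hev_inl]
  have hgK : ∀ i : Fin n, ∃ w, w ∈ K ∧ ev w = (gv i) ^ E := by
    intro i
    obtain ⟨w, hw, hwe⟩ := hcomm (hEpow i)
    exact ⟨w, hw, hwe⟩
  choose wv hwK hwev using hgK
  -- push the system to A
  set Φ : Monoid.Coprod G (FreeGroup (Fin n)) →* Monoid.Coprod A (FreeGroup (Fin n)) :=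
    Monoid.Coprod.map φ (MonoidHom.id _) with hΦ
  have hab : (toFreeAb A n).comp Φ = toFreeAb G n := by
    apply Monoid.Coprod.hom_ext
    · ext g; simp [hΦ, toFreeAb, Monoid.Coprod.lift_apply_inl]
    · ext j; simp [hΦ, toFreeAb, Monoid.Coprod.lift_apply_inr]
  set S : NullSys R A :=
    { n := n
      e := E
      he := hEDR
      w := fun i => Φ (wv i)
      nullh := fun i => by
        rw [← MonoidHom.comp_apply, hab]
        exact (hwK i).1 } with hS
  have hsol1 : S.IsSolution (fun i => φ (gv i)) := by
    intro i
    have hcomp : (evalWord (fun i => φ (gv i))).comp Φ = φ.comp ev := by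
      apply Monoid.Coprod.hom_ext
      · ext g; simp [hΦ, evalWord, hev]
      · ext j; simp [hΦ, evalWord, hev]
    show (φ (gv i)) ^ S.e = evalWord (fun i => φ (gv i)) (S.w i)
    have : evalWord (fun i => φ (gv i)) (S.w i) = φ (ev (wv i)) := by
      show ((evalWord (fun i => φ (gv i))).comp Φ) (wv i) = _
      rw [hcomp]; rfl
    rw [this, hwev i, map_pow]
  have hsol2 : S.IsSolution (fun _ => 1) := by
    intro i
    have hcomp : (evalWord (fun _ : Fin n => (1 : A))).comp Φ = φ.comp π := by
      apply Monoid.Coprod.hom_ext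
      · ext g; simp [hΦ, evalWord, hπ]
      · ext j; simp [hΦ, evalWord, hπ]
    show (1 : A) ^ S.e = evalWord (fun _ => (1 : A)) (S.w i)
    have : evalWord (fun _ : Fin n => (1 : A)) (S.w i) = φ (π (wv i)) := by
      show ((evalWord (fun _ : Fin n => (1 : A))).comp Φ) (wv i) = _
      rw [hcomp]; rfl
    rw [this, MonoidHom.mem_ker.mp (hwK i).2, map_one, one_pow]
  obtain ⟨g₀, -, huniq⟩ := hA S
  have heq : (fun i => φ (gv i)) = (fun _ : Fin S.n => (1 : A)) :=
    (huniq _ hsol1).trans (huniq _ hsol2).symm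
  -- conclude
  rw [← hclos]
  apply Subgroup.normalClosure_le_normal
  intro x hx
  have : φ (gv (s.equivFin ⟨x, hx⟩)) = 1 := congrFun heq _
  simp only [hgv, Equiv.symm_apply_apply] at this
  exact MonoidHom.mem_ker.mpr this
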